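/- Under the setting of Lemma 5.1 (linear process with smooth coefficients and uniformly elliptic ã), there exists C > 0 such that for all s ∈ [0,T) and x, y ∈ ℝ^d: (a) (T-s)‖H̃(s)‖ ≤ C; (b) ‖r̃(s,x)‖ ≤ C(1 + ‖v-x‖/(T-s)); (c) ‖r̃(s,y) - r̃(s,x)‖ ≤ C‖y-x‖/(T-s); and (d) ‖v-x‖/(T-s) ≤ C(1 + ‖r̃(s,x)‖). -/

import Mathlib

open Matrix Real intervalIntegral

set_option maxHeartbeats 1000000

attribute [local instance] Matrix.normedAddCommGroup Matrix.normedSpace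

/-- Euclidean norm of a vector in `ℝ^d`. -/
noncomputable def enorm9 {d : ℕ} (y : Fin d → ℝ) : ℝ := Real.sqrt (y ⬝ᵥ y)

section helpers

variable {d : ℕ}

lemma dotSelf_nonneg (y : Fin d → ℝ) : 0 ≤ y ⬝ᵥ y :=
  Finset.sum_nonneg fun i _ => mul_self_nonneg _

lemma enorm9_nonneg (y : Fin d → ℝ) : 0 ≤ enorm9 y := Real.sqrt_nonneg _

lemma enorm9_sq (y : Fin d → ℝ) : enorm9 y ^ 2 = y ⬝ᵥ y := Real.sq_sqrt (dotSelf_nonneg y)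

noncomputable def toE9 {d : ℕ} (y : Fin d → ℝ) : EuclideanSpace ℝ (Fin d) :=
  (WithLp.equiv 2 _).symm y

lemma enorm9_eq (y : Fin d → ℝ) : enorm9 y = ‖toE9 y‖ := by
  rw [EuclideanSpace.norm_eq]
  unfold enorm9 dotProduct
  congr 1
  refine Finset.sum_congr rfl fun i _ => ?_
  rw [Real.norm_eq_abs, sq_abs, sq]
  rfl

lemma dot_eq_inner (x y : Fin d → ℝ) : x ⬝ᵥ y = inner ℝ (toE9 x) (toE9 y) := by
  rw [PiLp.inner_apply]
  simp [dotProduct, toE9, mul_comm]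

lemma dot_le_enorm9 (x y : Fin d → ℝ) : x ⬝ᵥ y ≤ enorm9 x * enorm9 y := by
  rw [dot_eq_inner, enorm9_eq, enorm9_eq]
  exact real_inner_le_norm _ _

lemma enorm9_neg (y : Fin d → ℝ) : enorm9 (-y) = enorm9 y := by
  unfold enorm9
  rw [neg_dotProduct, dotProduct_neg, neg_neg]

lemma enorm9_add_le (x y : Fin d → ℝ) : enorm9 (x + y) ≤ enorm9 x + enorm9 y := by
  rw [enorm9_eq, enorm9_eq, enorm9_eq]
  exact norm_add_le (toE9 x) (toE9 y)

lemma enorm9_sub_le (x y : Fin d → ℝ) : enorm9 (x - y) ≤ enorm9 x + enorm9 y := by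
  rw [sub_eq_add_neg, ← enorm9_neg y] at *
  exact enorm9_add_le x (-y)

lemma norm_le_enorm9 (y : Fin d → ℝ) : ‖y‖ ≤ enorm9 y := by
  rw [pi_norm_le_iff_of_nonneg (enorm9_nonneg y)]
  intro i
  rw [Real.norm_eq_abs, ← Real.sqrt_sq_eq_abs]
  apply Real.sqrt_le_sqrt
  rw [sq]
  exact Finset.single_le_sum (f := fun j => y j * y j)
    (fun j _ => mul_self_nonneg _) (Finset.mem_univ i)

lemma enorm9_le_norm (y : Fin d → ℝ) : enorm9 y ≤ Real.sqrt d * ‖y‖ := by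
  have h : y ⬝ᵥ y ≤ (d : ℝ) * ‖y‖ ^ 2 := by
    unfold dotProduct
    calc ∑ i, y i * y i ≤ ∑ _i : Fin d, ‖y‖ ^ 2 := by
          refine Finset.sum_le_sum fun i _ => ?_
          have := norm_le_pi_norm y i
          have h0 : (0:ℝ) ≤ ‖y i‖ := norm_nonneg _
          rw [show y i * y i = ‖y i‖^2 by rw [Real.norm_eq_abs, sq_abs, sq]]
          exact pow_le_pow_left₀ h0 this 2
      _ = (d : ℝ) * ‖y‖ ^ 2 := by simp [Finset.sum_const, Finset.card_univ, mul_comm]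
  calc enorm9 y ≤ Real.sqrt ((d : ℝ) * ‖y‖ ^ 2) := Real.sqrt_le_sqrt h
    _ = Real.sqrt d * ‖y‖ := by
        rw [Real.sqrt_mul (Nat.cast_nonneg d), Real.sqrt_sq (norm_nonneg _)]

lemma mnorm_one : ‖(1 : Matrix (Fin d) (Fin d) ℝ)‖ ≤ 1 := by
  rw [Matrix.norm_le_iff zero_le_one]
  intro i j
  rw [Matrix.one_apply]
  split <;> simp

lemma mnorm_mul (A B : Matrix (Fin d) (Fin d) ℝ) : ‖A * B‖ ≤ d * ‖A‖ * ‖B‖ := by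
  have hnn : (0:ℝ) ≤ d * ‖A‖ * ‖B‖ := by positivity
  rw [Matrix.norm_le_iff hnn]
  intro i j
  rw [Matrix.mul_apply]
  calc ‖∑ k, A i k * B k j‖ ≤ ∑ k, ‖A i k * B k j‖ := norm_sum_le _ _
    _ ≤ ∑ _k : Fin d, ‖A‖ * ‖B‖ := by
        refine Finset.sum_le_sum fun k _ => ?_
        rw [norm_mul]
        exact mul_le_mul (A.norm_entry_le_entrywise_sup_norm)
          (B.norm_entry_le_entrywise_sup_norm) (norm_nonneg _) (norm_nonneg _)
    _ = d * ‖A‖ * ‖B‖ := by simp [Finset.sum_const, Finset.card_univ]; ring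

lemma norm_mulVec_le (A : Matrix (Fin d) (Fin d) ℝ) (y : Fin d → ℝ) :
    ‖A *ᵥ y‖ ≤ d * ‖A‖ * ‖y‖ := by
  have hnn : (0:ℝ) ≤ d * ‖A‖ * ‖y‖ := by positivity
  rw [pi_norm_le_iff_of_nonneg hnn]
  intro i
  rw [Matrix.mulVec, dotProduct]
  calc ‖∑ k, A i k * y k‖ ≤ ∑ k, ‖A i k * y k‖ := norm_sum_le _ _
    _ ≤ ∑ _k : Fin d, ‖A‖ * ‖y‖ := by
        refine Finset.sum_le_sum fun k _ => ?_
        rw [norm_mul]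
        exact mul_le_mul (A.norm_entry_le_entrywise_sup_norm)
          (norm_le_pi_norm y k) (norm_nonneg _) (norm_nonneg _)
    _ = d * ‖A‖ * ‖y‖ := by simp [Finset.sum_const, Finset.card_univ]; ring

lemma enorm9_mulVec_le (A : Matrix (Fin d) (Fin d) ℝ) (y : Fin d → ℝ) :
    enorm9 (A *ᵥ y) ≤ Real.sqrt d * d * ‖A‖ * enorm9 y := by
  calc enorm9 (A *ᵥ y) ≤ Real.sqrt d * ‖A *ᵥ y‖ := enorm9_le_norm _
    _ ≤ Real.sqrt d * (d * ‖A‖ * ‖y‖) := by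
        apply mul_le_mul_of_nonneg_left (norm_mulVec_le A y) (Real.sqrt_nonneg _)
    _ ≤ Real.sqrt d * (d * ‖A‖ * enorm9 y) := by
        apply mul_le_mul_of_nonneg_left _ (Real.sqrt_nonneg _)
        apply mul_le_mul_of_nonneg_left (norm_le_enorm9 y) (by positivity)
    _ = Real.sqrt d * d * ‖A‖ * enorm9 y := by ring

end helpers

/-- Lemma 5.3: bounds on `H̃` and `r̃` for the linear process:
(a) `(T-s)‖H̃(s)‖ ≤ C` (operator norm), (b) `‖r̃(s,x)‖ ≤ C(1+‖v-x‖/(T-s))`,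
(c) `‖r̃(s,y)-r̃(s,x)‖ ≤ C‖y-x‖/(T-s)`, (d) `‖v-x‖/(T-s) ≤ C(1+‖r̃(s,x)‖)`. -/
theorem stmt_9 {d : ℕ} (T : ℝ) (hT : 0 < T) (v : Fin d → ℝ)
    (Btil : ℝ → Matrix (Fin d) (Fin d) ℝ) (βtil : ℝ → Fin d → ℝ)
    (atil : ℝ → Matrix (Fin d) (Fin d) ℝ)
    (hB : ContDiffOn ℝ 1 Btil (Set.Icc 0 T))
    (hβ : ContDiffOn ℝ 1 βtil (Set.Icc 0 T))
    (ha : ContinuousOn atil (Set.Icc 0 T))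
    (η : ℝ) (hη : 0 < η)
    (hell : ∀ s ∈ Set.Icc (0 : ℝ) T, ∀ y : Fin d → ℝ,
      η * (y ⬝ᵥ y) ≤ y ⬝ᵥ (atil s *ᵥ y))
    -- `Φ t s` is the fundamental matrix of `x' = B̃(t) x`
    (Φ : ℝ → ℝ → Matrix (Fin d) (Fin d) ℝ)
    (hΦid : ∀ s, Φ s s = 1)
    (hΦderiv : ∀ t s : ℝ, HasDerivAt (fun r => Φ r s) (Btil t * Φ t s) t)
    (vfun : ℝ → Fin d → ℝ)
    (hvfun : ∀ s, vfun s = Φ s T *ᵥ v - ∫ τ in s..T, Φ s τ *ᵥ βtil τ)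
    (Htil : ℝ → Matrix (Fin d) (Fin d) ℝ)
    (hHtil : ∀ s, Htil s = (∫ τ in s..T, Φ s τ * atil τ * (Φ s τ)ᵀ)⁻¹)
    (rtil : ℝ → (Fin d → ℝ) → Fin d → ℝ)
    (hrtil : ∀ s x, rtil s x = Htil s *ᵥ (vfun s - x)) :
    ∃ C > (0 : ℝ), ∀ s ∈ Set.Ico (0 : ℝ) T, ∀ x y : Fin d → ℝ,
      (T - s) * enorm9 (Htil s *ᵥ y) ≤ C * enorm9 y ∧
      enorm9 (rtil s x) ≤ C * (1 + enorm9 (v - x) / (T - s)) ∧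
      enorm9 (rtil s y - rtil s x) ≤ C * enorm9 (y - x) / (T - s) ∧
      enorm9 (v - x) / (T - s) ≤ C * (1 + enorm9 (rtil s x)) := by
  -- bounds on coefficients
  obtain ⟨KB0, hKB0⟩ := isCompact_Icc.exists_bound_of_continuousOn hB.continuousOn
  obtain ⟨Ka0, hKa0⟩ := isCompact_Icc.exists_bound_of_continuousOn ha
  obtain ⟨Kβ0, hKβ0⟩ := isCompact_Icc.exists_bound_of_continuousOn hβ.continuousOn
  set KB := max KB0 0 with hKBdef
  set Ka := max Ka0 0 with hKadef
  set Kβ := max Kβ0 0 with hKβdef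
  have hKBnn : (0:ℝ) ≤ KB := le_max_right _ _
  have hKann : (0:ℝ) ≤ Ka := le_max_right _ _
  have hKβnn : (0:ℝ) ≤ Kβ := le_max_right _ _
  have hKB : ∀ t ∈ Set.Icc (0:ℝ) T, ‖Btil t‖ ≤ KB :=
    fun t ht => (hKB0 t ht).trans (le_max_left _ _)
  have hKa : ∀ t ∈ Set.Icc (0:ℝ) T, ‖atil t‖ ≤ Ka :=
    fun t ht => (hKa0 t ht).trans (le_max_left _ _)
  have hKβ : ∀ t ∈ Set.Icc (0:ℝ) T, ‖βtil t‖ ≤ Kβ :=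
    fun t ht => (hKβ0 t ht).trans (le_max_left _ _)
  set K : ℝ := d * KB with hKdef
  have hKnn : (0:ℝ) ≤ K := by positivity
  have hbound : ∀ t ∈ Set.Icc (0:ℝ) T, ∀ M : Matrix (Fin d) (Fin d) ℝ,
      ‖Btil t * M‖ ≤ K * ‖M‖ := by
    intro t ht M
    calc ‖Btil t * M‖ ≤ d * ‖Btil t‖ * ‖M‖ := mnorm_mul _ _
      _ ≤ d * KB * ‖M‖ := by
          apply mul_le_mul_of_nonneg_right _ (norm_nonneg _)
          exact mul_le_mul_of_nonneg_left (hKB t ht) (Nat.cast_nonneg d)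
  -- continuity of Φ in the first variable
  have hΦc : ∀ s, Continuous (fun r => Φ r s) := fun s =>
    continuous_iff_continuousAt.2 fun r => (hΦderiv r s).continuousAt
  set KΦ : ℝ := Real.exp (K * T) with hKΦdef
  have hKΦpos : 0 < KΦ := Real.exp_pos _
  -- forward Gronwall bound
  have hfor : ∀ s ∈ Set.Icc (0:ℝ) T, ∀ t ∈ Set.Icc s T, ‖Φ t s‖ ≤ KΦ := by
    intro s hs t ht
    have h := norm_le_gronwallBound_of_norm_deriv_right_le (f := fun r => Φ r s)
      (f' := fun r => Btil r * Φ r s) (δ := 1) (K := K) (ε := 0) (a := s) (b := T)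
      ((hΦc s).continuousOn)
      (fun x _ => (hΦderiv x s).hasDerivWithinAt)
      (by show ‖Φ s s‖ ≤ 1; rw [hΦid]; exact mnorm_one)
      (fun x hx => by
        show ‖Btil x * Φ x s‖ ≤ K * ‖Φ x s‖ + 0
        rw [add_zero]
        exact hbound x ⟨hs.1.trans hx.1, hx.2.le⟩ _)
      t ht
    rw [gronwallBound_ε0, one_mul] at h
    refine h.trans (Real.exp_le_exp.2 ?_)
    have ht' : t - s ≤ T := by
      have := ht.2; have := hs.1; linarith
    exact mul_le_mul_of_nonneg_left ht' hKnn
  -- backward Gronwall bound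
  have hback : ∀ τ ∈ Set.Icc (0:ℝ) T, ∀ t ∈ Set.Icc 0 τ, ‖Φ t τ‖ ≤ KΦ := by
    intro τ hτ t ht
    have hg : ∀ u : ℝ, HasDerivAt (fun u => Φ (-u) τ)
        ((-1 : ℝ) • (Btil (-u) * Φ (-u) τ)) u := by
      intro u
      have h1 := (hΦderiv (-u) τ).scomp (h := fun u : ℝ => -u) (x := u) (hasDerivAt_neg u)
      exact h1
    have h := norm_le_gronwallBound_of_norm_deriv_right_le (f := fun u => Φ (-u) τ)
      (f' := fun u => (-1 : ℝ) • (Btil (-u) * Φ (-u) τ)) (δ := 1) (K := K) (ε := 0)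
      (a := -τ) (b := -t)
      (((hΦc τ).comp continuous_neg).continuousOn)
      (fun x _ => (hg x).hasDerivWithinAt)
      (by show ‖Φ (- -τ) τ‖ ≤ 1; rw [neg_neg, hΦid]; exact mnorm_one)
      (fun x hx => by
        show ‖(-1 : ℝ) • (Btil (-x) * Φ (-x) τ)‖ ≤ K * ‖Φ (-x) τ‖ + 0
        rw [add_zero, neg_one_smul, norm_neg]
        refine hbound (-x) ⟨?_, ?_⟩ _
        · have := hx.2; have := ht.1; linarith
        · have := hx.1; have := hτ.2; linarith)
      (-t) ⟨neg_le_neg ht.2, le_refl _⟩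
    rw [gronwallBound_ε0, one_mul] at h
    have h' : ‖Φ t τ‖ ≤ Real.exp (K * (-t - -τ)) := by
      simpa using h
    refine h'.trans (Real.exp_le_exp.2 ?_)
    have ht' : -t - -τ ≤ T := by
      have := hτ.2; have := ht.1; linarith
    exact mul_le_mul_of_nonneg_left ht' hKnn
  have hKΦ : ∀ a ∈ Set.Icc (0:ℝ) T, ∀ b ∈ Set.Icc (0:ℝ) T, ‖Φ a b‖ ≤ KΦ := by
    intro a ha' b hb'
    rcases le_total a b with hab | hab
    · exact hback b hb' a ⟨ha'.1, hab⟩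
    · exact hfor b hb' a ⟨hab, ha'.2⟩
  
  -- uniqueness of solutions of the linear ODE on [0,T]
  set V : ℝ → Matrix (Fin d) (Fin d) ℝ → Matrix (Fin d) (Fin d) ℝ :=
    fun t M => Btil (max 0 (min t T)) * M with hVdef
  have hclamp : ∀ t : ℝ, max 0 (min t T) ∈ Set.Icc (0:ℝ) T := by
    intro t
    constructor
    · exact le_max_left _ _
    · exact max_le hT.le (min_le_right t T)
  have hVlip : ∀ t : ℝ, LipschitzOnWith K.toNNReal (V t) Set.univ := by
    intro t
    apply LipschitzWith.lipschitzOnWith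
    apply LipschitzWith.of_dist_le_mul
    intro M N
    rw [dist_eq_norm, dist_eq_norm, Real.coe_toNNReal K hKnn]
    have : V t M - V t N = Btil (max 0 (min t T)) * (M - N) := by
      rw [mul_sub]
    rw [this]
    exact hbound _ (hclamp t) _
  have huniq : ∀ f g : ℝ → Matrix (Fin d) (Fin d) ℝ,
      (∀ t, HasDerivAt f (Btil t * f t) t) →
      (∀ t, HasDerivAt g (Btil t * g t) t) →
      ∀ t₀ ∈ Set.Icc (0:ℝ) T, f t₀ = g t₀ → ∀ t ∈ Set.Icc (0:ℝ) T, f t = g t := by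
    intro f g hf hg t₀ ht₀ heq t ht
    have hVeq : ∀ r ∈ Set.Icc (0:ℝ) T, ∀ M, V r M = Btil r * M := by
      intro r hr M
      rw [hVdef]
      simp only
      rw [min_eq_left hr.2, max_eq_right hr.1]
    rcases le_total t₀ t with h01 | h01
    · refine ODE_solution_unique_of_mem_Icc_right (v := V) (s := fun _ => Set.univ)
        (fun t _ => hVlip t) (f := f) (g := g) (a := t₀) (b := t)
        ?_ ?_ (fun _ _ => trivial) ?_ ?_ (fun _ _ => trivial) heq ⟨h01, le_refl t⟩
      · exact (continuous_iff_continuousAt.2 fun r => (hf r).continuousAt).continuousOn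
      · intro r hr
        rw [hVeq r ⟨ht₀.1.trans hr.1, hr.2.le.trans ht.2⟩]
        exact (hf r).hasDerivWithinAt
      · exact (continuous_iff_continuousAt.2 fun r => (hg r).continuousAt).continuousOn
      · intro r hr
        rw [hVeq r ⟨ht₀.1.trans hr.1, hr.2.le.trans ht.2⟩]
        exact (hg r).hasDerivWithinAt
    · refine ODE_solution_unique_of_mem_Icc_left (v := V) (s := fun _ => Set.univ)
        (fun t _ => hVlip t) (f := f) (g := g) (a := t) (b := t₀)
        ?_ ?_ (fun _ _ => trivial) ?_ ?_ (fun _ _ => trivial) heq ⟨le_refl t, h01⟩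
      · exact (continuous_iff_continuousAt.2 fun r => (hf r).continuousAt).continuousOn
      · intro r hr
        rw [hVeq r ⟨ht.1.trans hr.1.le, hr.2.trans ht₀.2⟩]
        exact (hf r).hasDerivWithinAt
      · exact (continuous_iff_continuousAt.2 fun r => (hg r).continuousAt).continuousOn
      · intro r hr
        rw [hVeq r ⟨ht.1.trans hr.1.le, hr.2.trans ht₀.2⟩]
        exact (hg r).hasDerivWithinAt
  -- derivative of r ↦ Φ r s * C
  have hmulright : ∀ (C : Matrix (Fin d) (Fin d) ℝ) (r s : ℝ),
      HasDerivAt (fun r => Φ r s * C) (Btil r * (Φ r s * C)) r := by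
    intro C r s
    have hL := (LinearMap.toContinuousLinearMap
      (LinearMap.mulRight ℝ C)).hasFDerivAt.comp_hasDerivAt r (hΦderiv r s)
    simp only [LinearMap.coe_toContinuousLinearMap', LinearMap.mulRight_apply] at hL
    refine hL.congr_deriv ?_
    show Btil r * Φ r s * C = _
    rw [mul_assoc]
  -- semigroup property
  have hsg : ∀ s ∈ Set.Icc (0:ℝ) T, ∀ τ ∈ Set.Icc (0:ℝ) T, ∀ r ∈ Set.Icc (0:ℝ) T,
      Φ r s * Φ s τ = Φ r τ := by
    intro s hs τ hτ r hr
    exact huniq (fun r => Φ r s * Φ s τ) (fun r => Φ r τ)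
      (fun r => hmulright _ r s) (fun r => hΦderiv r τ) s hs
      (by show Φ s s * Φ s τ = Φ s τ; rw [hΦid, one_mul]) r hr
  
  have h0T : (0:ℝ) ∈ Set.Icc (0:ℝ) T := ⟨le_refl _, hT.le⟩
  -- inverses
  have hinv : ∀ s ∈ Set.Icc (0:ℝ) T, ∀ τ ∈ Set.Icc (0:ℝ) T, Φ s τ * Φ τ s = 1 := by
    intro s hs τ hτ
    rw [hsg τ hτ s hs s hs, hΦid]
  have hdetne : ∀ τ ∈ Set.Icc (0:ℝ) T, (Φ τ 0).det ≠ 0 := by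
    intro τ hτ
    have h1 : (Φ 0 τ).det * (Φ τ 0).det = 1 := by
      rw [← Matrix.det_mul, hinv 0 h0T τ hτ, Matrix.det_one]
    exact right_ne_zero_of_mul_eq_one h1
  -- continuity of τ ↦ Φ s τ on [0,T]
  have hΦc2 : ∀ s ∈ Set.Icc (0:ℝ) T, ContinuousOn (fun τ => Φ s τ) (Set.Icc 0 T) := by
    intro s hs
    have h0 : Continuous fun τ => Φ τ 0 := hΦc 0
    have hF : ContinuousOn
        (fun τ => Φ s 0 * ((Φ τ 0).det⁻¹ • (Φ τ 0).adjugate)) (Set.Icc 0 T) := by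
      have hsmul : ContinuousOn (fun τ => (Φ τ 0).det⁻¹ • (Φ τ 0).adjugate)
          (Set.Icc 0 T) :=
        (h0.matrix_det.continuousOn.inv₀ hdetne).smul h0.matrix_adjugate.continuousOn
      have hmul : Continuous fun X : Matrix (Fin d) (Fin d) ℝ => Φ s 0 * X :=
        continuous_const.matrix_mul continuous_id
      exact hmul.comp_continuousOn hsmul
    refine ContinuousOn.congr hF ?_
    intro τ hτ
    have e1 : Φ s τ = Φ s 0 * Φ 0 τ := (hsg 0 h0T τ hτ s hs).symm
    have e2 : (Φ τ 0)⁻¹ = Φ 0 τ := Matrix.inv_eq_left_inv (hinv 0 h0T τ hτ)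
    have e3 : Φ 0 τ = (Φ τ 0).det⁻¹ • (Φ τ 0).adjugate := by
      rw [← e2, Matrix.inv_def, Ring.inverse_eq_inv']
    show Φ s τ = Φ s 0 * ((Φ τ 0).det⁻¹ • (Φ τ 0).adjugate)
    rw [e1, e3]
  -- continuity & integrability of the integrand of M
  have hGcont : ∀ s ∈ Set.Icc (0:ℝ) T,
      ContinuousOn (fun τ => Φ s τ * atil τ * (Φ s τ)ᵀ) (Set.Icc 0 T) := by
    intro s hs
    have ht : ContinuousOn (fun τ => (Φ s τ)ᵀ) (Set.Icc 0 T) :=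
      (continuous_id.matrix_transpose).comp_continuousOn (hΦc2 s hs)
    exact ((hΦc2 s hs).mul ha).mul ht
  set G : ℝ → ℝ → Matrix (Fin d) (Fin d) ℝ :=
    fun s τ => Φ s τ * atil τ * (Φ s τ)ᵀ with hGdef
  set M : ℝ → Matrix (Fin d) (Fin d) ℝ := fun s => ∫ τ in s..T, G s τ with hMdef
  have hMint : ∀ s ∈ Set.Icc (0:ℝ) T, @IntervalIntegrable _ PseudoMetricSpace.toUniformSpace.toTopologicalSpace inferInstance (G s) MeasureTheory.volume s T := by
    intro s hs
    apply ContinuousOn.intervalIntegrable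
    rw [Set.uIcc_of_le hs.2]
    exact (hGcont s hs).mono (Set.Icc_subset_Icc_left hs.1)
  
  -- dot-product functional as a continuous linear map
  have hdotlin : ∀ z : Fin d → ℝ, ∃ L : Matrix (Fin d) (Fin d) ℝ →L[ℝ] ℝ,
      ∀ A, L A = z ⬝ᵥ (A *ᵥ z) := by
    intro z
    refine ⟨LinearMap.toContinuousLinearMap
      { toFun := fun A => z ⬝ᵥ (A *ᵥ z)
        map_add' := by
          intro A B
          show z ⬝ᵥ (A + B) *ᵥ z = z ⬝ᵥ A *ᵥ z + z ⬝ᵥ B *ᵥ z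
          rw [Matrix.add_mulVec, dotProduct_add]
        map_smul' := by
          intro c A
          show z ⬝ᵥ (c • A) *ᵥ z = (RingHom.id ℝ) c • (z ⬝ᵥ A *ᵥ z)
          rw [Matrix.smul_mulVec, dotProduct_smul]
          rfl }, fun A => rfl⟩
  set cK : ℝ := Real.sqrt d * d * KΦ + 1 with hcKdef
  have hcKpos : 0 < cK := by positivity
  set c1 : ℝ := η / cK ^ 2 with hc1def
  have hc1pos : 0 < c1 := by positivity
  have hc1cK : c1 * cK ^ 2 = η := div_mul_cancel₀ η (pow_ne_zero 2 hcKpos.ne')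
  -- quadratic lower bound for M s
  have hlow : ∀ s ∈ Set.Ico (0:ℝ) T, ∀ z : Fin d → ℝ,
      c1 * ((T - s) * (z ⬝ᵥ z)) ≤ z ⬝ᵥ (M s *ᵥ z) := by
    intro s hsI z
    have sIcc : s ∈ Set.Icc (0:ℝ) T := ⟨hsI.1, hsI.2.le⟩
    obtain ⟨L, hL⟩ := hdotlin z
    -- pointwise bound
    have hpt : ∀ τ ∈ Set.Icc s T, c1 * (z ⬝ᵥ z) ≤ z ⬝ᵥ (G s τ *ᵥ z) := by
      intro τ hτ
      have τIcc : τ ∈ Set.Icc (0:ℝ) T := ⟨hsI.1.trans hτ.1, hτ.2⟩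
      set w : Fin d → ℝ := (Φ s τ)ᵀ *ᵥ z with hwdef
      have key1 : z ⬝ᵥ (G s τ *ᵥ z) = w ⬝ᵥ (atil τ *ᵥ w) := by
        rw [hGdef]
        show z ⬝ᵥ (Φ s τ * atil τ * (Φ s τ)ᵀ) *ᵥ z = _
        rw [← Matrix.mulVec_mulVec, ← Matrix.mulVec_mulVec,
          Matrix.dotProduct_mulVec z (Φ s τ), ← Matrix.mulVec_transpose]
      have key2 : enorm9 z ≤ cK * enorm9 w := by
        have e : (Φ τ s)ᵀ *ᵥ w = z := by
          rw [hwdef, Matrix.mulVec_mulVec, ← Matrix.transpose_mul,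
            hinv s sIcc τ τIcc, Matrix.transpose_one, Matrix.one_mulVec]
        calc enorm9 z = enorm9 ((Φ τ s)ᵀ *ᵥ w) := by rw [e]
          _ ≤ Real.sqrt d * d * ‖(Φ τ s)ᵀ‖ * enorm9 w := enorm9_mulVec_le _ _
          _ ≤ cK * enorm9 w := by
              apply mul_le_mul_of_nonneg_right _ (enorm9_nonneg w)
              rw [Matrix.norm_transpose]
              have h1 : Real.sqrt d * d * ‖Φ τ s‖ ≤ Real.sqrt d * d * KΦ := by
                apply mul_le_mul_of_nonneg_left (hKΦ τ τIcc s sIcc) (by positivity)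
              exact h1.trans (by rw [hcKdef]; linarith)
      have hzz : z ⬝ᵥ z ≤ cK ^ 2 * (w ⬝ᵥ w) := by
        rw [← enorm9_sq, ← enorm9_sq]
        nlinarith [enorm9_nonneg z, enorm9_nonneg w, key2, hcKpos]
      calc c1 * (z ⬝ᵥ z) ≤ c1 * (cK ^ 2 * (w ⬝ᵥ w)) :=
            mul_le_mul_of_nonneg_left hzz hc1pos.le
        _ = η * (w ⬝ᵥ w) := by rw [← mul_assoc, hc1cK]
        _ ≤ w ⬝ᵥ (atil τ *ᵥ w) := hell τ τIcc w
        _ = z ⬝ᵥ (G s τ *ᵥ z) := key1.symm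
    have hintg : IntervalIntegrable (fun τ => z ⬝ᵥ (G s τ *ᵥ z)) MeasureTheory.volume s T := by
      have hc : ContinuousOn (fun τ => z ⬝ᵥ (G s τ *ᵥ z)) (Set.Icc 0 T) := by
        have := L.continuous.comp_continuousOn (hGcont s sIcc)
        refine ContinuousOn.congr this fun τ _ => (hL _).symm
      apply ContinuousOn.intervalIntegrable
      rw [Set.uIcc_of_le sIcc.2]
      exact hc.mono (Set.Icc_subset_Icc_left sIcc.1)
    have hmono := intervalIntegral.integral_mono_on (μ := MeasureTheory.volume) sIcc.2
      (_root_.intervalIntegrable_const (c := c1 * (z ⬝ᵥ z))) hintg hpt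
    have hconst : (∫ _τ in s..T, c1 * (z ⬝ᵥ z)) = (T - s) * (c1 * (z ⬝ᵥ z)) := by
      rw [intervalIntegral.integral_const, smul_eq_mul]
    have hval : z ⬝ᵥ (M s *ᵥ z) = ∫ τ in s..T, z ⬝ᵥ (G s τ *ᵥ z) := by
      calc z ⬝ᵥ (M s *ᵥ z) = L (M s) := (hL _).symm
        _ = L (∫ τ in s..T, G s τ) := rfl
        _ = ∫ τ in s..T, L (G s τ) := (L.intervalIntegral_comp_comm (hMint s sIcc)).symm
        _ = ∫ τ in s..T, z ⬝ᵥ (G s τ *ᵥ z) := by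
            apply intervalIntegral.integral_congr
            intro τ _
            exact hL _
    rw [hval]
    rw [hconst] at hmono
    linarith [hmono]
  have TIcc : T ∈ Set.Icc (0:ℝ) T := ⟨hT.le, le_refl T⟩
  -- invertibility of M s
  have hMunit : ∀ s ∈ Set.Ico (0:ℝ) T, M s * Htil s = 1 ∧ Htil s * M s = 1 := by
    intro s hsI
    have hTs : 0 < T - s := sub_pos.2 hsI.2
    have hinj : Function.Injective (M s).mulVec := by
      intro z1 z2 h12
      have h0 : M s *ᵥ (z1 - z2) = 0 := by
        rw [Matrix.mulVec_sub, h12, sub_self]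
      have hl := hlow s hsI (z1 - z2)
      rw [h0, dotProduct_zero] at hl
      have hzz : (z1 - z2) ⬝ᵥ (z1 - z2) = 0 := by
        refine le_antisymm ?_ (dotSelf_nonneg _)
        nlinarith [hl, mul_pos hc1pos hTs, dotSelf_nonneg (z1 - z2)]
      exact sub_eq_zero.1 (dotProduct_self_eq_zero.1 hzz)
    have hU : IsUnit (M s) := Matrix.mulVec_injective_iff_isUnit.1 hinj
    have hUdet : IsUnit (M s).det := (Matrix.isUnit_iff_isUnit_det _).1 hU
    have hH : Htil s = (M s)⁻¹ := hHtil s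
    exact ⟨by rw [hH]; exact Matrix.mul_nonsing_inv _ hUdet,
      by rw [hH]; exact Matrix.nonsing_inv_mul _ hUdet⟩
  set Ca : ℝ := 1 / c1 with hCadef
  have hCapos : 0 < Ca := by positivity
  -- part (a) bound, for all vectors
  have ha' : ∀ s ∈ Set.Ico (0:ℝ) T, ∀ w : Fin d → ℝ,
      (T - s) * enorm9 (Htil s *ᵥ w) ≤ Ca * enorm9 w := by
    intro s hsI w
    have hTs : 0 < T - s := sub_pos.2 hsI.2
    set z := Htil s *ᵥ w with hz
    have hMz : M s *ᵥ z = w := by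
      rw [hz, Matrix.mulVec_mulVec, (hMunit s hsI).1, Matrix.one_mulVec]
    have h1 : c1 * ((T - s) * (z ⬝ᵥ z)) ≤ z ⬝ᵥ w := by
      have h := hlow s hsI z; rwa [hMz] at h
    have h2 : z ⬝ᵥ w ≤ enorm9 z * enorm9 w := dot_le_enorm9 _ _
    rcases eq_or_lt_of_le (enorm9_nonneg z) with hez | hez
    · rw [← hez, mul_zero]
      exact mul_nonneg hCapos.le (enorm9_nonneg w)
    · have hzz : z ⬝ᵥ z = enorm9 z ^ 2 := (enorm9_sq z).symm
      have h3 : (c1 * (T - s) * enorm9 z) * enorm9 z ≤ enorm9 w * enorm9 z := by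
        calc (c1 * (T - s) * enorm9 z) * enorm9 z = c1 * ((T - s) * (z ⬝ᵥ z)) := by
              rw [hzz]; ring
          _ ≤ z ⬝ᵥ w := h1
          _ ≤ enorm9 z * enorm9 w := h2
          _ = enorm9 w * enorm9 z := mul_comm _ _
      have h4 := le_of_mul_le_mul_right h3 hez
      have hCac1 : Ca * c1 = 1 := by
        rw [hCadef]; exact one_div_mul_cancel hc1pos.ne'
      calc (T - s) * enorm9 z = Ca * (c1 * (T - s) * enorm9 z) := by
            rw [show Ca * (c1 * (T - s) * enorm9 z)
              = Ca * c1 * ((T - s) * enorm9 z) from by ring, hCac1, one_mul]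
        _ ≤ Ca * enorm9 w := mul_le_mul_of_nonneg_left h4 hCapos.le
  -- derivative of r ↦ Φ r T *ᵥ v
  have hmv : ∀ r : ℝ, HasDerivAt (fun r => Φ r T *ᵥ v) ((Btil r * Φ r T) *ᵥ v) r := by
    intro r
    have hL := (LinearMap.toContinuousLinearMap
      { toFun := fun A : Matrix (Fin d) (Fin d) ℝ => A *ᵥ v
        map_add' := fun A B => Matrix.add_mulVec A B v
        map_smul' := fun c A => by
          show (c • A) *ᵥ v = (RingHom.id ℝ) c • (A *ᵥ v)
          rw [Matrix.smul_mulVec]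
          rfl }).hasFDerivAt.comp_hasDerivAt r (hΦderiv r T)
    exact hL
  set Cmv : ℝ := d * (d * KB * KΦ) * ‖v‖ with hCmvdef
  have hCmvnn : 0 ≤ Cmv := by positivity
  have hgbound : ∀ r ∈ Set.Icc (0:ℝ) T, ‖(Btil r * Φ r T) *ᵥ v‖ ≤ Cmv := by
    intro r hr
    calc ‖(Btil r * Φ r T) *ᵥ v‖ ≤ d * ‖Btil r * Φ r T‖ * ‖v‖ := norm_mulVec_le _ _
      _ ≤ Cmv := by
          rw [hCmvdef]
          apply mul_le_mul_of_nonneg_right _ (norm_nonneg v)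
          apply mul_le_mul_of_nonneg_left _ (Nat.cast_nonneg d)
          calc ‖Btil r * Φ r T‖ ≤ d * ‖Btil r‖ * ‖Φ r T‖ := mnorm_mul _ _
            _ ≤ d * KB * KΦ :=
                mul_le_mul (mul_le_mul_of_nonneg_left (hKB r hr) (Nat.cast_nonneg d))
                  (hKΦ r hr T TIcc) (norm_nonneg _) (by positivity)
  have hmvT : ∀ s ∈ Set.Icc (0:ℝ) T, ‖Φ s T *ᵥ v - v‖ ≤ Cmv * (T - s) := by
    intro s hs
    have h := Convex.norm_image_sub_le_of_norm_hasDerivWithin_le (f := fun r => Φ r T *ᵥ v)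
      (f' := fun r => (Btil r * Φ r T) *ᵥ v) (C := Cmv) (s := Set.Icc (0:ℝ) T)
      (fun r _ => (hmv r).hasDerivWithinAt) hgbound (convex_Icc _ _) TIcc hs
    have h2 : ‖Φ s T *ᵥ v - v‖ ≤ Cmv * ‖s - T‖ := by
      simpa [hΦid, Matrix.one_mulVec] using h
    rwa [Real.norm_eq_abs, abs_sub_comm, abs_of_nonneg (by linarith [hs.2])] at h2
  set Cint : ℝ := d * KΦ * Kβ with hCintdef
  have hintb : ∀ s ∈ Set.Icc (0:ℝ) T, ‖∫ τ in s..T, Φ s τ *ᵥ βtil τ‖ ≤ Cint * (T - s) := by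
    intro s hs
    have h := intervalIntegral.norm_integral_le_of_norm_le_const (C := Cint)
      (f := fun τ => Φ s τ *ᵥ βtil τ) (a := s) (b := T) ?side
    case side =>
      intro x hx
      rw [Set.uIoc_of_le hs.2] at hx
      have hxI : x ∈ Set.Icc (0:ℝ) T := ⟨hs.1.trans hx.1.le, hx.2⟩
      calc ‖Φ s x *ᵥ βtil x‖ ≤ d * ‖Φ s x‖ * ‖βtil x‖ := norm_mulVec_le _ _
        _ ≤ Cint := by
            rw [hCintdef]
            exact mul_le_mul (mul_le_mul_of_nonneg_left (hKΦ s hs x hxI) (Nat.cast_nonneg d))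
              (hKβ x hxI) (norm_nonneg _) (by positivity)
    rwa [abs_of_nonneg (by linarith [hs.2])] at h
  set Cv : ℝ := Real.sqrt d * Cmv + Real.sqrt d * Cint with hCvdef
  have hCvnn : 0 ≤ Cv := by positivity
  have hv0 : ∀ s ∈ Set.Icc (0:ℝ) T, enorm9 (vfun s - v) ≤ Cv * (T - s) := by
    intro s hs
    have e : vfun s - v = (Φ s T *ᵥ v - v) - (∫ τ in s..T, Φ s τ *ᵥ βtil τ) := by
      rw [hvfun s, sub_right_comm]
    rw [e]
    calc enorm9 _ ≤ enorm9 (Φ s T *ᵥ v - v) + enorm9 (∫ τ in s..T, Φ s τ *ᵥ βtil τ) :=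
          enorm9_sub_le _ _
      _ ≤ Real.sqrt d * ‖Φ s T *ᵥ v - v‖ + Real.sqrt d * ‖∫ τ in s..T, Φ s τ *ᵥ βtil τ‖ :=
          add_le_add (enorm9_le_norm _) (enorm9_le_norm _)
      _ ≤ Real.sqrt d * (Cmv * (T - s)) + Real.sqrt d * (Cint * (T - s)) :=
          add_le_add (mul_le_mul_of_nonneg_left (hmvT s hs) (Real.sqrt_nonneg _))
            (mul_le_mul_of_nonneg_left (hintb s hs) (Real.sqrt_nonneg _))
      _ = Cv * (T - s) := by rw [hCvdef]; ring
  set CM : ℝ := d * (d * KΦ * Ka) * KΦ with hCMdef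
  have hCMnn : 0 ≤ CM := by positivity
  have hMb : ∀ s ∈ Set.Ico (0:ℝ) T, ‖M s‖ ≤ CM * (T - s) := by
    intro s hsI
    have hs : s ∈ Set.Icc (0:ℝ) T := ⟨hsI.1, hsI.2.le⟩
    have h := intervalIntegral.norm_integral_le_of_norm_le_const (C := CM)
      (f := G s) (a := s) (b := T) ?side
    case side =>
      intro x hx
      rw [Set.uIoc_of_le hs.2] at hx
      have hxI : x ∈ Set.Icc (0:ℝ) T := ⟨hs.1.trans hx.1.le, hx.2⟩
      show ‖Φ s x * atil x * (Φ s x)ᵀ‖ ≤ CM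
      calc ‖Φ s x * atil x * (Φ s x)ᵀ‖ ≤ d * ‖Φ s x * atil x‖ * ‖(Φ s x)ᵀ‖ := mnorm_mul _ _
        _ ≤ CM := by
            rw [Matrix.norm_transpose, hCMdef]
            have h1 : ‖Φ s x * atil x‖ ≤ d * KΦ * Ka := by
              calc ‖Φ s x * atil x‖ ≤ d * ‖Φ s x‖ * ‖atil x‖ := mnorm_mul _ _
                _ ≤ d * KΦ * Ka :=
                    mul_le_mul (mul_le_mul_of_nonneg_left (hKΦ s hs x hxI) (Nat.cast_nonneg d))
                      (hKa x hxI) (norm_nonneg _) (by positivity)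
            exact mul_le_mul (mul_le_mul_of_nonneg_left h1 (Nat.cast_nonneg d))
              (hKΦ s hs x hxI) (norm_nonneg _) (by positivity)
    rwa [abs_of_nonneg (by linarith [hs.2])] at h
  set cdM : ℝ := Real.sqrt d * d * CM with hcdMdef
  have hcdMnn : 0 ≤ cdM := by positivity
  set C : ℝ := Ca + Ca * Cv + Cv + cdM + 1 with hCdef
  have hCpos : 0 < C := by positivity
  have hCaC : Ca ≤ C := by nlinarith [hCapos, hCvnn, hcdMnn, mul_nonneg hCapos.le hCvnn]
  have hCaCvC : Ca * Cv ≤ C := by nlinarith [hCapos, hCvnn, hcdMnn]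
  have hCvC : Cv ≤ C := by nlinarith [hCapos, hCvnn, hcdMnn, mul_nonneg hCapos.le hCvnn]
  have hcdMC : cdM ≤ C := by nlinarith [hCapos, hCvnn, hcdMnn, mul_nonneg hCapos.le hCvnn]
  refine ⟨C, hCpos, ?_⟩
  intro s hsI x y
  have hs : s ∈ Set.Icc (0:ℝ) T := ⟨hsI.1, hsI.2.le⟩
  have hTs : 0 < T - s := sub_pos.2 hsI.2
  refine ⟨?_, ?_, ?_, ?_⟩
  -- (a)
  · exact (ha' s hsI y).trans (mul_le_mul_of_nonneg_right hCaC (enorm9_nonneg y))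
  -- (b)
  · have hb1 : (T - s) * enorm9 (rtil s x) ≤ Ca * (Cv * (T - s)) + Ca * enorm9 (v - x) := by
      rw [hrtil]
      calc (T - s) * enorm9 (Htil s *ᵥ (vfun s - x))
          ≤ Ca * enorm9 (vfun s - x) := ha' s hsI _
        _ ≤ Ca * (enorm9 (vfun s - v) + enorm9 (v - x)) := by
            apply mul_le_mul_of_nonneg_left _ hCapos.le
            rw [show vfun s - x = (vfun s - v) + (v - x) from by abel]
            exact enorm9_add_le _ _
        _ ≤ Ca * (Cv * (T - s)) + Ca * enorm9 (v - x) := by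
            have h5 := hv0 s hs
            nlinarith [hCapos]
    refine le_of_mul_le_mul_right ?_ hTs
    have hdm : enorm9 (v - x) / (T - s) * (T - s) = enorm9 (v - x) :=
      div_mul_cancel₀ _ hTs.ne'
    have hexp : (C * (1 + enorm9 (v - x) / (T - s))) * (T - s)
        = C * (T - s) + C * enorm9 (v - x) := by
      calc (C * (1 + enorm9 (v - x) / (T - s))) * (T - s)
          = C * (T - s) + C * (enorm9 (v - x) / (T - s) * (T - s)) := by ring
        _ = C * (T - s) + C * enorm9 (v - x) := by rw [hdm]
    rw [hexp]
    linarith [hb1, mul_le_mul_of_nonneg_right hCaCvC hTs.le,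
      mul_le_mul_of_nonneg_right hCaC (enorm9_nonneg (v - x))]
  -- (c)
  · have hc' : rtil s y - rtil s x = Htil s *ᵥ (x - y) := by
      rw [hrtil, hrtil, ← Matrix.mulVec_sub]
      congr 1
      abel
    rw [hc', le_div_iff₀ hTs]
    have h6 := ha' s hsI (x - y)
    have hxy : enorm9 (x - y) = enorm9 (y - x) := by rw [← neg_sub y x, enorm9_neg]
    rw [hxy] at h6
    have h7 : Ca * enorm9 (y - x) ≤ C * enorm9 (y - x) :=
      mul_le_mul_of_nonneg_right hCaC (enorm9_nonneg _)
    linarith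
  -- (d)
  · have hd1 : vfun s - x = M s *ᵥ rtil s x := by
      rw [hrtil, Matrix.mulVec_mulVec, (hMunit s hsI).1, Matrix.one_mulVec]
    have hd2 : enorm9 (v - x) ≤ Cv * (T - s) + cdM * (T - s) * enorm9 (rtil s x) := by
      rw [show v - x = (v - vfun s) + (vfun s - x) from by abel]
      calc enorm9 _ ≤ enorm9 (v - vfun s) + enorm9 (vfun s - x) := enorm9_add_le _ _
        _ ≤ Cv * (T - s) + cdM * (T - s) * enorm9 (rtil s x) := by
            apply add_le_add
            · rw [show v - vfun s = -(vfun s - v) from by abel, enorm9_neg]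
              exact hv0 s hs
            · rw [hd1]
              calc enorm9 (M s *ᵥ rtil s x)
                  ≤ Real.sqrt d * d * ‖M s‖ * enorm9 (rtil s x) := enorm9_mulVec_le _ _
                _ ≤ cdM * (T - s) * enorm9 (rtil s x) := by
                    apply mul_le_mul_of_nonneg_right _ (enorm9_nonneg _)
                    rw [hcdMdef]
                    calc Real.sqrt d * d * ‖M s‖
                        ≤ Real.sqrt d * d * (CM * (T - s)) := by
                          apply mul_le_mul_of_nonneg_left (hMb s hsI) (by positivity)
                      _ = Real.sqrt d * d * CM * (T - s) := by ring
    rw [div_le_iff₀ hTs]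
    have h8 : Cv * (T - s) ≤ C * (T - s) := mul_le_mul_of_nonneg_right hCvC hTs.le
    have h9 : cdM * (T - s) * enorm9 (rtil s x) ≤ C * (T - s) * enorm9 (rtil s x) := by
      apply mul_le_mul_of_nonneg_right _ (enorm9_nonneg _)
      exact mul_le_mul_of_nonneg_right hcdMC hTs.le
    calc enorm9 (v - x) ≤ Cv * (T - s) + cdM * (T - s) * enorm9 (rtil s x) := hd2
      _ ≤ C * (T - s) + C * (T - s) * enorm9 (rtil s x) := add_le_add h8 h9
      _ = C * (1 + enorm9 (rtil s x)) * (T - s) := by ring
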